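/- Consider a feedforward ReLU network with weight matrices W^{(l)} and no biases, and the Stopping decomposition with decomposed pre-activations z^{(l,±)}. For a backward path P = (P_l, ..., P_0) from neuron i in layer l to the input layer, let |w|(P) be the product of absolute weights along P, let sgn(P) be + if the number of negative weights along P is even and - otherwise, and let G(P) = ∏_{t=1}^{l-1} 1[z^{(t)}_{P_t} > 0] be the gate factor. Then z^{(l,+)}_i = Σ_{P: P_l = i} G(P)·|w|(P)·x^{sgn(P)}_{P_0} and z^{(l,-)}_i = Σ_{P: P_l = i} G(P)·|w|(P)·x^{-sgn(P)}_{P_0}, where x^+ and x^- denote positive and negative parts of the corresponding input coordinate. In particular, z^{(l,+)}_i - z^{(l,-)}_i = Σ_P G(P)·w(P)·x_{P_0} with w(P) the signed weight product. -/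

import Mathlib

set_option maxHeartbeats 1000000


open Finset

noncomputable section

/-- Positive part of a real number. -/
def pPart (u : ℝ) : ℝ := max u 0

/-- Negative part of a real number. -/
def nPart (u : ℝ) : ℝ := max (-u) 0

/-- Activations of a feedforward ReLU network without biases. -/
def nbAct (n : ℕ → ℕ) (W : ∀ l, Fin (n (l + 1)) → Fin (n l) → ℝ)
    (x : Fin (n 0) → ℝ) : ∀ l, Fin (n l) → ℝ
  | 0 => x
  | (l + 1) => fun i => max (∑ j, W l i j * nbAct n W x l j) 0

/-- Pre-activations of the bias-free ReLU network (input at layer 0). -/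
def nbPre (n : ℕ → ℕ) (W : ∀ l, Fin (n (l + 1)) → Fin (n l) → ℝ)
    (x : Fin (n 0) → ℝ) : ∀ l, Fin (n l) → ℝ
  | 0 => x
  | (l + 1) => fun i => ∑ j, W l i j * nbAct n W x l j

/-- Stopping-decomposition activation pairs of the bias-free network. -/
def nbStop (n : ℕ → ℕ) (W : ∀ l, Fin (n (l + 1)) → Fin (n l) → ℝ)
    (x : Fin (n 0) → ℝ) : ∀ l, Fin (n l) → ℝ × ℝ
  | 0 => fun k => (pPart (x k), nPart (x k))
  | (l + 1) => fun i =>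
      let zp := ∑ j, (pPart (W l i j) * (nbStop n W x l j).1 +
        nPart (W l i j) * (nbStop n W x l j).2)
      let zm := ∑ j, (pPart (W l i j) * (nbStop n W x l j).2 +
        nPart (W l i j) * (nbStop n W x l j).1)
      (if 0 < zp - zm then zp else 0, if 0 < zp - zm then zm else 0)

/-- Decomposed pre-activation `z^{(l+1,+)}` of the bias-free Stopping decomposition. -/
def nbZp (n : ℕ → ℕ) (W : ∀ l, Fin (n (l + 1)) → Fin (n l) → ℝ)
    (x : Fin (n 0) → ℝ) (l : ℕ) (i : Fin (n (l + 1))) : ℝ :=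
  ∑ j, (pPart (W l i j) * (nbStop n W x l j).1 + nPart (W l i j) * (nbStop n W x l j).2)

/-- Decomposed pre-activation `z^{(l+1,−)}` of the bias-free Stopping decomposition. -/
def nbZm (n : ℕ → ℕ) (W : ∀ l, Fin (n (l + 1)) → Fin (n l) → ℝ)
    (x : Fin (n 0) → ℝ) (l : ℕ) (i : Fin (n (l + 1))) : ℝ :=
  ∑ j, (pPart (W l i j) * (nbStop n W x l j).2 + nPart (W l i j) * (nbStop n W x l j).1)


lemma pn_sub (u : ℝ) : pPart u - nPart u = u := by
  rcases le_total u 0 with h | h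
  · rw [pPart, nPart, max_eq_right h, max_eq_left (neg_nonneg.2 h)]; ring
  · rw [pPart, nPart, max_eq_left h, max_eq_right (neg_nonpos.2 h)]; ring

variable {n : ℕ → ℕ} {W : ∀ l, Fin (n (l + 1)) → Fin (n l) → ℝ} {x : Fin (n 0) → ℝ}

lemma nbSub : ∀ (l : ℕ) (i : Fin (n l)),
    (nbStop n W x l i).1 - (nbStop n W x l i).2 = nbAct n W x l i := by
  intro l
  induction l with
  | zero => intro i; exact pn_sub _
  | succ l ih =>
    intro i
    have hz : nbZp n W x l i - nbZm n W x l i = nbPre n W x (l + 1) i := by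
      rw [nbZp, nbZm, nbPre, ← Finset.sum_sub_distrib]
      refine Finset.sum_congr rfl fun j _ => ?_
      linear_combination (pPart (W l i j) - nPart (W l i j)) * ih j +
        nbAct n W x l j * pn_sub (W l i j)
    show (if 0 < nbZp n W x l i - nbZm n W x l i then nbZp n W x l i else 0) -
        (if 0 < nbZp n W x l i - nbZm n W x l i then nbZm n W x l i else 0) =
        nbAct n W x (l + 1) i
    have ha : nbAct n W x (l + 1) i = max (nbPre n W x (l + 1) i) 0 := rfl
    by_cases h : 0 < nbZp n W x l i - nbZm n W x l i
    · rw [if_pos h, if_pos h, hz, ha, max_eq_left (hz ▸ h.le)]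
    · rw [if_neg h, if_neg h, ha, max_eq_right (by rw [← hz]; linarith [not_lt.1 h])]; ring

lemma zsub (l : ℕ) (i : Fin (n (l + 1))) :
    nbZp n W x l i - nbZm n W x l i = nbPre n W x (l + 1) i := by
  rw [nbZp, nbZm, nbPre, ← Finset.sum_sub_distrib]
  refine Finset.sum_congr rfl fun j _ => ?_
  linear_combination (pPart (W l i j) - nPart (W l i j)) * nbSub l j +
    nbAct n W x l j * pn_sub (W l i j)

lemma stop_fst (l : ℕ) (i : Fin (n (l + 1))) :
    (nbStop n W x (l + 1) i).1 =
      (if 0 < nbPre n W x (l + 1) i then (1 : ℝ) else 0) * nbZp n W x l i := by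
  show (if 0 < nbZp n W x l i - nbZm n W x l i then nbZp n W x l i else 0) = _
  rw [zsub]; split_ifs <;> ring

lemma stop_snd (l : ℕ) (i : Fin (n (l + 1))) :
    (nbStop n W x (l + 1) i).2 =
      (if 0 < nbPre n W x (l + 1) i then (1 : ℝ) else 0) * nbZm n W x l i := by
  show (if 0 < nbZp n W x l i - nbZm n W x l i then nbZm n W x l i else 0) = _
  rw [zsub]; split_ifs <;> ring

lemma prod_abs_sign {α : Type*} [Fintype α] (f : α → ℝ) :
    ∏ t, f t =
      (if (Finset.univ.filter fun t => f t < 0).card % 2 = 0 then (1 : ℝ) else -1) *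
        ∏ t, |f t| := by
  have h1 : ∀ t, f t = (if f t < 0 then (-1 : ℝ) else 1) * |f t| := by
    intro t
    rcases lt_or_ge (f t) 0 with h | h
    · rw [if_pos h, abs_of_neg h]; ring
    · rw [if_neg (not_lt.2 h), abs_of_nonneg h]; ring
  calc ∏ t, f t = ∏ t, ((if f t < 0 then (-1 : ℝ) else 1) * |f t|) :=
        Finset.prod_congr rfl fun t _ => h1 t
    _ = (∏ t, (if f t < 0 then (-1 : ℝ) else 1)) * ∏ t, |f t| := Finset.prod_mul_distrib
    _ = _ := by
        congr 1
        rw [Finset.prod_ite, Finset.prod_const, Finset.prod_const, one_pow, mul_one]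
        by_cases h : (Finset.univ.filter fun t => f t < 0).card % 2 = 0
        · rw [if_pos h, Even.neg_one_pow (Nat.even_iff.2 h)]
        · rw [if_neg h, Odd.neg_one_pow (Nat.odd_iff.2 (by omega))]

lemma part_sel (w a b : ℝ) :
    pPart w * a + nPart w * b = |w| * (if w < 0 then b else a) := by
  rcases lt_or_ge w 0 with h | h
  · rw [if_pos h, pPart, nPart, max_eq_right h.le, max_eq_left (neg_nonneg.2 h.le),
      abs_of_neg h]; ring
  · rw [if_neg (not_lt.2 h), pPart, nPart, max_eq_left h, max_eq_right (neg_nonpos.2 h),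
      abs_of_nonneg h]; ring

lemma main12 (l : ℕ) : ∀ i : Fin (n (l + 1)),
    (nbZp n W x l i =
      ∑ P : (t : Fin (l + 2)) → Fin (n t.val),
        (if P (Fin.last (l + 1)) = i then
          (∏ t : Fin (l + 2),
            if 0 < t.val ∧ t.val < l + 1 then
              (if 0 < nbPre n W x t.val (P t) then (1 : ℝ) else 0)
            else 1) *
          (∏ t : Fin (l + 1), |W t.val (P t.succ) (P t.castSucc)|) *
            (if (Finset.univ.filter fun t : Fin (l + 1) =>
                W t.val (P t.succ) (P t.castSucc) < 0).card % 2 = 0 then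
              pPart (x (P ⟨0, Nat.zero_lt_succ _⟩)) else nPart (x (P ⟨0, Nat.zero_lt_succ _⟩)))
        else 0)) ∧
    (nbZm n W x l i =
      ∑ P : (t : Fin (l + 2)) → Fin (n t.val),
        (if P (Fin.last (l + 1)) = i then
          (∏ t : Fin (l + 2),
            if 0 < t.val ∧ t.val < l + 1 then
              (if 0 < nbPre n W x t.val (P t) then (1 : ℝ) else 0)
            else 1) *
          (∏ t : Fin (l + 1), |W t.val (P t.succ) (P t.castSucc)|) *
            (if (Finset.univ.filter fun t : Fin (l + 1) =>
                W t.val (P t.succ) (P t.castSucc) < 0).card % 2 = 0 then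
              nPart (x (P ⟨0, Nat.zero_lt_succ _⟩)) else pPart (x (P ⟨0, Nat.zero_lt_succ _⟩)))
        else 0)) := by
  induction l with
  | zero =>
    intro i
    constructor
    · rw [Fintype.sum_equiv (piFinTwoEquiv fun t : Fin 2 => Fin (n t.val)) _
        (fun q : Fin (n 0) × Fin (n 1) =>
          if q.2 = i then |W 0 q.2 q.1| *
            (if W 0 q.2 q.1 < 0 then nPart (x q.1) else pPart (x q.1)) else 0)
        (fun P => ?_), Fintype.sum_prod_type]
      · simp only [Finset.sum_ite_eq', Finset.mem_univ, if_true]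
        show (∑ j, (pPart (W 0 i j) * pPart (x j) + nPart (W 0 i j) * nPart (x j))) = _
        exact Finset.sum_congr rfl fun j _ => part_sel _ _ _
      · by_cases hw : W 0 (P 1) (P 0) < 0 <;>
          simp [Fin.prod_univ_two, Fin.prod_univ_one, Finset.univ_unique,
            Finset.filter_singleton, Fin.last, hw, Fin.succ_zero_eq_one,
            Fin.castSucc_zero, piFinTwoEquiv, Equiv.coe_fn_mk]
    · rw [Fintype.sum_equiv (piFinTwoEquiv fun t : Fin 2 => Fin (n t.val)) _
        (fun q : Fin (n 0) × Fin (n 1) =>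
          if q.2 = i then |W 0 q.2 q.1| *
            (if W 0 q.2 q.1 < 0 then pPart (x q.1) else nPart (x q.1)) else 0)
        (fun P => ?_), Fintype.sum_prod_type]
      · simp only [Finset.sum_ite_eq', Finset.mem_univ, if_true]
        show (∑ j, (pPart (W 0 i j) * nPart (x j) + nPart (W 0 i j) * pPart (x j))) = _
        exact Finset.sum_congr rfl fun j _ => part_sel _ _ _
      · by_cases hw : W 0 (P 1) (P 0) < 0 <;>
          simp [Fin.prod_univ_two, Fin.prod_univ_one, Finset.univ_unique,
            Finset.filter_singleton, Fin.last, hw, Fin.succ_zero_eq_one,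
            Fin.castSucc_zero, piFinTwoEquiv, Equiv.coe_fn_mk]
  | succ l ih =>
    intro i
    have KEY : ∀ (A B : Fin (n 0) → ℝ) (Fp Fm : Fin (n (l + 1)) → ℝ),
        (∀ m, Fp m = ∑ Q : (t : Fin (l + 2)) → Fin (n t.val),
          (if Q (Fin.last (l + 1)) = m then
            (∏ t : Fin (l + 2),
              if 0 < t.val ∧ t.val < l + 1 then
                (if 0 < nbPre n W x t.val (Q t) then (1 : ℝ) else 0)
              else 1) *
            (∏ t : Fin (l + 1), |W t.val (Q t.succ) (Q t.castSucc)|) *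
              (if (Finset.univ.filter fun t : Fin (l + 1) =>
                  W t.val (Q t.succ) (Q t.castSucc) < 0).card % 2 = 0 then
                A (Q ⟨0, Nat.zero_lt_succ _⟩) else B (Q ⟨0, Nat.zero_lt_succ _⟩))
          else 0)) →
        (∀ m, Fm m = ∑ Q : (t : Fin (l + 2)) → Fin (n t.val),
          (if Q (Fin.last (l + 1)) = m then
            (∏ t : Fin (l + 2),
              if 0 < t.val ∧ t.val < l + 1 then
                (if 0 < nbPre n W x t.val (Q t) then (1 : ℝ) else 0)
              else 1) *
            (∏ t : Fin (l + 1), |W t.val (Q t.succ) (Q t.castSucc)|) *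
              (if (Finset.univ.filter fun t : Fin (l + 1) =>
                  W t.val (Q t.succ) (Q t.castSucc) < 0).card % 2 = 0 then
                B (Q ⟨0, Nat.zero_lt_succ _⟩) else A (Q ⟨0, Nat.zero_lt_succ _⟩))
          else 0)) →
        (∑ m, (pPart (W (l + 1) i m) *
            ((if 0 < nbPre n W x (l + 1) m then (1 : ℝ) else 0) * Fp m) +
          nPart (W (l + 1) i m) *
            ((if 0 < nbPre n W x (l + 1) m then (1 : ℝ) else 0) * Fm m))) =
        ∑ P : (t : Fin (l + 1 + 2)) → Fin (n t.val),
          (if P (Fin.last (l + 1 + 1)) = i then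
            (∏ t : Fin (l + 1 + 2),
              if 0 < t.val ∧ t.val < l + 1 + 1 then
                (if 0 < nbPre n W x t.val (P t) then (1 : ℝ) else 0)
              else 1) *
            (∏ t : Fin (l + 1 + 1), |W t.val (P t.succ) (P t.castSucc)|) *
              (if (Finset.univ.filter fun t : Fin (l + 1 + 1) =>
                  W t.val (P t.succ) (P t.castSucc) < 0).card % 2 = 0 then
                A (P ⟨0, Nat.zero_lt_succ _⟩) else B (P ⟨0, Nat.zero_lt_succ _⟩))
          else 0) := by
      intro A B Fp Fm hFp hFm
      rw [← (Fin.snocEquiv (fun t : Fin (l + 1 + 2) => Fin (n t.val))).sum_comp,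
        Fintype.sum_prod_type]
      simp only [Fin.snocEquiv_apply, Fin.snoc_last]
      rw [Finset.sum_comm]
      simp only [Finset.sum_ite_eq', Finset.mem_univ, if_true]
      simp only [hFp, hFm, Finset.mul_sum]
      simp only [← Finset.sum_add_distrib]
      rw [Finset.sum_comm]
      refine Finset.sum_congr rfl fun Q _ => ?_
      simp only [mul_ite, mul_zero]
      rw [Finset.sum_add_distrib]
      simp only [Finset.sum_ite_eq, Finset.mem_univ, if_true]
      have hsnoc : ∀ (s : Fin (l + 1 + 2)) (hs : s.val < l + 1 + 1),
          Fin.snoc (α := fun t : Fin (l + 1 + 2) => Fin (n t.val)) Q i s = Q ⟨s.val, hs⟩ := by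
        intro s hs
        rcases s with ⟨sv, hsv⟩
        exact Fin.snoc_castSucc _ _ ⟨sv, hs⟩
      have h00 : Fin.snoc (α := fun t : Fin (l + 1 + 2) => Fin (n t.val)) Q i
          ⟨0, Nat.zero_lt_succ _⟩ = Q ⟨0, Nat.zero_lt_succ _⟩ := hsnoc _ (by simp)
      have hgate : (∏ t : Fin (l + 1 + 2),
            if 0 < t.val ∧ t.val < l + 1 + 1 then
              (if 0 < nbPre n W x t.val (Fin.snoc (α := fun t : Fin (l + 1 + 2) => Fin (n t.val)) Q i t) then (1 : ℝ) else 0)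
            else 1) =
          (∏ t : Fin (l + 2),
            if 0 < t.val ∧ t.val < l + 1 then
              (if 0 < nbPre n W x t.val (Q t) then (1 : ℝ) else 0)
            else 1) *
          (if 0 < nbPre n W x (l + 1) (Q (Fin.last (l + 1))) then (1 : ℝ) else 0) := by
        conv_lhs => rw [Fin.prod_univ_castSucc, Fin.prod_univ_castSucc]
        conv_rhs => rw [Fin.prod_univ_castSucc]
        simp only [Fin.coe_castSucc, Fin.val_last]
        rw [if_neg (by omega : ¬(0 < l + 1 + 1 ∧ l + 1 + 1 < l + 1 + 1)), mul_one,
          if_neg (by omega : ¬(0 < l + 1 ∧ l + 1 < l + 1)), mul_one,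
          if_pos (by omega : 0 < l + 1 ∧ l + 1 < l + 1 + 1),
          show Fin.snoc (α := fun t : Fin (l + 1 + 2) => Fin (n t.val)) Q i
            (Fin.last (l + 1)).castSucc = Q (Fin.last (l + 1)) from hsnoc _
            (by simp only [Fin.coe_castSucc, Fin.val_last]; omega)]
        congr 1
        refine Finset.prod_congr rfl fun t _ => ?_
        rw [show Fin.snoc (α := fun t : Fin (l + 1 + 2) => Fin (n t.val)) Q i
            t.castSucc.castSucc = Q t.castSucc from hsnoc _
            (by simp only [Fin.coe_castSucc]; omega)]
        have ht := t.isLt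
        congr 1
        exact propext (by omega)
      have habs : (∏ t : Fin (l + 1 + 1),
            |W t.val (Fin.snoc (α := fun t : Fin (l + 1 + 2) => Fin (n t.val)) Q i t.succ) (Fin.snoc (α := fun t : Fin (l + 1 + 2) => Fin (n t.val)) Q i t.castSucc)|) =
          (∏ t : Fin (l + 1), |W t.val (Q t.succ) (Q t.castSucc)|) *
            |W (l + 1) i (Q (Fin.last (l + 1)))| := by
        rw [Fin.prod_univ_castSucc]
        congr 1
        · refine Finset.prod_congr rfl fun t _ => ?_
          rw [show Fin.snoc (α := fun t : Fin (l + 1 + 2) => Fin (n t.val)) Q i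
              t.castSucc.succ = Q t.succ from hsnoc _
              (by simp only [Fin.val_succ, Fin.coe_castSucc]; omega),
            show Fin.snoc (α := fun t : Fin (l + 1 + 2) => Fin (n t.val)) Q i
              t.castSucc.castSucc = Q t.castSucc from hsnoc _
              (by simp only [Fin.coe_castSucc]; omega)]
          rfl
        · rw [show Fin.snoc (α := fun t : Fin (l + 1 + 2) => Fin (n t.val)) Q i
              (Fin.last (l + 1)).succ = i from Fin.snoc_last _ _,
            Fin.snoc_castSucc]
          rfl
      have hcard : (Finset.univ.filter fun t : Fin (l + 1 + 1) =>
            W t.val (Fin.snoc (α := fun t : Fin (l + 1 + 2) => Fin (n t.val)) Q i t.succ) (Fin.snoc (α := fun t : Fin (l + 1 + 2) => Fin (n t.val)) Q i t.castSucc) < 0).card =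
          (Finset.univ.filter fun t : Fin (l + 1) =>
            W t.val (Q t.succ) (Q t.castSucc) < 0).card +
          (if W (l + 1) i (Q (Fin.last (l + 1))) < 0 then 1 else 0) := by
        rw [Finset.card_filter, Finset.card_filter, Fin.sum_univ_castSucc]
        congr 1
        · refine Finset.sum_congr rfl fun t _ => ?_
          rw [show Fin.snoc (α := fun t : Fin (l + 1 + 2) => Fin (n t.val)) Q i
              t.castSucc.succ = Q t.succ from hsnoc _
              (by simp only [Fin.val_succ, Fin.coe_castSucc]; omega),
            show Fin.snoc (α := fun t : Fin (l + 1 + 2) => Fin (n t.val)) Q i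
              t.castSucc.castSucc = Q t.castSucc from hsnoc _
              (by simp only [Fin.coe_castSucc]; omega)]
          rfl
        · rw [show Fin.snoc (α := fun t : Fin (l + 1 + 2) => Fin (n t.val)) Q i
              (Fin.last (l + 1)).succ = i from Fin.snoc_last _ _,
            Fin.snoc_castSucc]
          rfl
      rw [hgate, habs, hcard, h00]
      set w := W (l + 1) i (Q (Fin.last (l + 1))) with hw
      set g : ℝ := if 0 < nbPre n W x (l + 1) (Q (Fin.last (l + 1))) then (1 : ℝ) else 0
      set G := ∏ t : Fin (l + 2),
        if 0 < t.val ∧ t.val < l + 1 then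
          (if 0 < nbPre n W x t.val (Q t) then (1 : ℝ) else 0) else 1
      set a := ∏ t : Fin (l + 1), |W t.val (Q t.succ) (Q t.castSucc)|
      set c := (Finset.univ.filter fun t : Fin (l + 1) =>
        W t.val (Q t.succ) (Q t.castSucc) < 0).card
      rcases lt_or_ge w 0 with hneg | hpos
      · rw [if_pos hneg]
        have hp : pPart w = 0 := by rw [pPart, max_eq_right hneg.le]
        have hn : nPart w = -w := by rw [nPart, max_eq_left (neg_nonneg.2 hneg.le)]
        have habsw : |w| = -w := abs_of_neg hneg
        by_cases hc : c % 2 = 0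
        · rw [if_pos hc, if_pos hc, if_neg (by omega : ¬ (c + 1) % 2 = 0), hp, hn, habsw]; ring
        · rw [if_neg hc, if_neg hc, if_pos (by omega : (c + 1) % 2 = 0), hp, hn, habsw]; ring
      · rw [if_neg (not_lt.2 hpos), add_zero]
        have hp : pPart w = w := by rw [pPart, max_eq_left hpos]
        have hn : nPart w = 0 := by rw [nPart, max_eq_right (neg_nonpos.2 hpos)]
        have habsw : |w| = w := abs_of_nonneg hpos
        by_cases hc : c % 2 = 0
        · rw [if_pos hc, if_pos hc, if_pos hc, hp, hn, habsw]; ring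
        · rw [if_neg hc, if_neg hc, if_neg hc, hp, hn, habsw]; ring
    constructor
    · have h0 : nbZp n W x (l + 1) i = ∑ m, (pPart (W (l + 1) i m) *
            ((if 0 < nbPre n W x (l + 1) m then (1 : ℝ) else 0) * nbZp n W x l m) +
          nPart (W (l + 1) i m) *
            ((if 0 < nbPre n W x (l + 1) m then (1 : ℝ) else 0) * nbZm n W x l m)) := by
        rw [nbZp]
        exact Finset.sum_congr rfl fun m _ => by rw [stop_fst, stop_snd]
      rw [h0]
      exact KEY (fun k => pPart (x k)) (fun k => nPart (x k)) (nbZp n W x l) (nbZm n W x l) (fun m => (ih m).1) (fun m => (ih m).2)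
    · have h0 : nbZm n W x (l + 1) i = ∑ m, (pPart (W (l + 1) i m) *
            ((if 0 < nbPre n W x (l + 1) m then (1 : ℝ) else 0) * nbZm n W x l m) +
          nPart (W (l + 1) i m) *
            ((if 0 < nbPre n W x (l + 1) m then (1 : ℝ) else 0) * nbZp n W x l m)) := by
        rw [nbZm]
        exact Finset.sum_congr rfl fun m _ => by rw [stop_fst, stop_snd]
      rw [h0]
      exact KEY (fun k => nPart (x k)) (fun k => pPart (x k)) (nbZm n W x l) (nbZp n W x l) (fun m => (ih m).2) (fun m => (ih m).1)

lemma main3 (l : ℕ) (i : Fin (n (l + 1))) :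
    nbZp n W x l i - nbZm n W x l i =
      ∑ P : (t : Fin (l + 2)) → Fin (n t.val),
        (if P (Fin.last (l + 1)) = i then
          (∏ t : Fin (l + 2),
            if 0 < t.val ∧ t.val < l + 1 then
              (if 0 < nbPre n W x t.val (P t) then (1 : ℝ) else 0)
            else 1) *
          (∏ t : Fin (l + 1), W t.val (P t.succ) (P t.castSucc)) *
            x (P ⟨0, Nat.zero_lt_succ _⟩)
        else 0) := by
  rw [(main12 l i).1, (main12 l i).2, ← Finset.sum_sub_distrib]
  refine Finset.sum_congr rfl fun P _ => ?_
  by_cases hP : P (Fin.last (l + 1)) = i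
  · rw [if_pos hP, if_pos hP, if_pos hP,
      prod_abs_sign (fun t : Fin (l + 1) => W t.val (P t.succ) (P t.castSucc))]
    by_cases hc : (Finset.univ.filter fun t : Fin (l + 1) =>
        W t.val (P t.succ) (P t.castSucc) < 0).card % 2 = 0
    · rw [if_pos hc, if_pos hc, if_pos hc]
      linear_combination ((∏ t : Fin (l + 2),
          if 0 < t.val ∧ t.val < l + 1 then
            (if 0 < nbPre n W x t.val (P t) then (1 : ℝ) else 0)
          else 1) *
        (∏ t : Fin (l + 1), |W t.val (P t.succ) (P t.castSucc)|)) *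
          pn_sub (x (P ⟨0, Nat.zero_lt_succ _⟩))
    · rw [if_neg hc, if_neg hc, if_neg hc]
      linear_combination (-((∏ t : Fin (l + 2),
          if 0 < t.val ∧ t.val < l + 1 then
            (if 0 < nbPre n W x t.val (P t) then (1 : ℝ) else 0)
          else 1) *
        (∏ t : Fin (l + 1), |W t.val (P t.succ) (P t.castSucc)|))) *
          pn_sub (x (P ⟨0, Nat.zero_lt_succ _⟩))
  · rw [if_neg hP, if_neg hP, if_neg hP, sub_zero]

/-- Parity-path representation of the Stopping decomposition (bias-free network).
A backward path from neuron `i` at layer `l+1` to the input layer is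
`P : (t : Fin (l+2)) → Fin (n t)` with `P (last) = i`; along it we take the product of
absolute weights, the gate factor over intermediate layers `1,…,l`, and the input part
`x⁺` or `x⁻` selected by the parity of the number of negative weights traversed. -/
theorem parity_path_decomposition (n : ℕ → ℕ)
    (W : ∀ l, Fin (n (l + 1)) → Fin (n l) → ℝ)
    (x : Fin (n 0) → ℝ) (l : ℕ) (i : Fin (n (l + 1))) :
    let edge : ((t : Fin (l + 2)) → Fin (n t.val)) → Fin (l + 1) → ℝ := fun P t =>
      W t.val (P t.succ) (P t.castSucc)
    let absw : ((t : Fin (l + 2)) → Fin (n t.val)) → ℝ := fun P => ∏ t, |edge P t|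
    let sgnw : ((t : Fin (l + 2)) → Fin (n t.val)) → ℝ := fun P => ∏ t, edge P t
    let evenSgn : ((t : Fin (l + 2)) → Fin (n t.val)) → Prop := fun P =>
      (Finset.univ.filter fun t => edge P t < 0).card % 2 = 0
    let gate : ((t : Fin (l + 2)) → Fin (n t.val)) → ℝ := fun P =>
      ∏ t : Fin (l + 2),
        if 0 < t.val ∧ t.val < l + 1 then
          (if 0 < nbPre n W x t.val (P t) then (1 : ℝ) else 0)
        else 1
    (nbZp n W x l i =
      ∑ P : (t : Fin (l + 2)) → Fin (n t.val),
        (if P (Fin.last (l + 1)) = i then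
          gate P * absw P *
            (if evenSgn P then pPart (x (P ⟨0, by omega⟩)) else nPart (x (P ⟨0, by omega⟩)))
        else 0)) ∧
    (nbZm n W x l i =
      ∑ P : (t : Fin (l + 2)) → Fin (n t.val),
        (if P (Fin.last (l + 1)) = i then
          gate P * absw P *
            (if evenSgn P then nPart (x (P ⟨0, by omega⟩)) else pPart (x (P ⟨0, by omega⟩)))
        else 0)) ∧
    (nbZp n W x l i - nbZm n W x l i =
      ∑ P : (t : Fin (l + 2)) → Fin (n t.val),
        (if P (Fin.last (l + 1)) = i then gate P * sgnw P * x (P ⟨0, by omega⟩) else 0)) := by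
  intro edge absw sgnw evenSgn gate
  exact ⟨(main12 l i).1, (main12 l i).2, main3 l i⟩

end
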